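/- arXiv:2006.00851 — 4 statements merged into one kernel-verified Lean document; each statement's English description precedes it below -/
import Mathlib

section
/- (van Douwen) Every directed set Λ admits a pairwise disjoint family of tr|Λ|-many cofinal subsets of Λ, each of cardinality tr|Λ|. -/
open Cardinal Set

/-- van Douwen's lemma: every directed set `Λ` admits a pairwise disjoint family of
`tr|Λ|`-many cofinal subsets, each of cardinality `tr|Λ|`, where
`tr|Λ| = min_{ξ∈Λ} |{α : ξ < α}|` is the true cardinality of `Λ`. -/
theorem stmt1 {Λ : Type u} [Preorder Λ] [Nonempty Λ]
    (hdir : ∀ a b : Λ, ∃ c : Λ, a ≤ c ∧ b ≤ c) :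
    ∃ (ι : Type u) (S : ι → Set Λ),
      Cardinal.mk ι = (⨅ ξ : Λ, Cardinal.mk {α : Λ // ξ < α}) ∧
      Pairwise (Function.onFun Disjoint S) ∧
      ∀ i : ι, (∀ a : Λ, ∃ c ∈ S i, a ≤ c) ∧
        Cardinal.mk (S i) = (⨅ ξ : Λ, Cardinal.mk {α : Λ // ξ < α}) := by
  classical
  set κ : Cardinal.{u} := ⨅ ξ : Λ, Cardinal.mk {α : Λ // ξ < α} with hκ
  by_cases h0 : κ = 0
  · refine ⟨ULift Empty, fun _ => ∅, ?_, ?_, ?_⟩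
    · rw [h0]; exact Cardinal.mk_eq_zero _
    · intro i j _; exact i.down.elim
    · intro i; exact i.down.elim
  have hpos : ∀ ξ : Λ, κ ≤ #{α : Λ // ξ < α} := fun ξ => ciInf_le' _ ξ
  obtain ⟨ξ₀, hξ₀⟩ : ∃ ξ₀ : Λ, #{α : Λ // ξ₀ < α} = κ := by
    obtain ⟨ξ₀, h⟩ := ciInf_mem fun ξ : Λ => #{α : Λ // ξ < α}
    rw [← hκ] at h
    exact ⟨ξ₀, h⟩
  set T : Set Λ := {α : Λ | ξ₀ < α} with hT
  have hTκ : #T = κ := hξ₀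
  have hTne : T.Nonempty := by
    rw [← Set.nonempty_coe_sort, ← Cardinal.mk_ne_zero_iff, hTκ]
    exact h0
  have hTcof : ∀ a : Λ, ∃ t ∈ T, a ≤ t := by
    intro a
    obtain ⟨t₀, ht₀⟩ := hTne
    obtain ⟨c, hac, htc⟩ := hdir a t₀
    exact ⟨c, lt_of_lt_of_le ht₀ htc, hac⟩
  have hTinf : T.Infinite := by
    intro hfin
    haveI : IsDirected Λ (· ≤ ·) := ⟨hdir⟩
    obtain ⟨M, hM⟩ := hfin.toFinset.exists_le
    obtain ⟨t₀, ht₀⟩ := hTne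
    have hMT : M ∈ T := lt_of_lt_of_le ht₀ (hM t₀ (hfin.mem_toFinset.mpr ht₀))
    have hne : Nonempty {α : Λ // M < α} := by
      rw [← Cardinal.mk_ne_zero_iff]
      intro h
      exact h0 (le_antisymm (h ▸ hpos M) (zero_le))
    obtain ⟨d, hd⟩ := hne
    have hdT : (d : Λ) ∈ T := lt_trans hMT hd
    exact absurd (hM d (hfin.mem_toFinset.mpr hdT)) (hd : M < d).not_ge
  have hinf : ℵ₀ ≤ κ := by
    haveI := hTinf.to_subtype
    rw [← hTκ]
    exact Cardinal.aleph0_le_mk _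
  -- the index type
  set W : Type u := κ.ord.ToType with hWdef
  have hW : #W = κ := by rw [hWdef, Cardinal.mk_toType, Cardinal.card_ord]
  have hWT : #(W × ↥T) = #W := by
    rw [Cardinal.mk_prod, hW, hTκ]
    simp only [Cardinal.lift_id]
    exact Cardinal.mul_eq_self hinf
  obtain ⟨e⟩ : Nonempty (W ≃ W × ↥T) := Cardinal.eq.mp hWT.symm
  -- the transfinite recursion step
  have step : ∀ (x : W) (IH : ∀ y : W, y < x → Λ),
      ∃ α : Λ, (↑(e x).2 : Λ) < α ∧ ∀ (y : W) (hy : y < x), IH y hy ≠ α := by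
    intro x IH
    by_contra hcon
    push_neg at hcon
    have hsub : ∀ α : {α : Λ // (↑(e x).2 : Λ) < α},
        ∃ y : Set.Iio x, IH y y.2 = (α : Λ) := by
      intro α
      obtain ⟨y, hy, h⟩ := hcon α α.2
      exact ⟨⟨y, hy⟩, h⟩
    choose g hg using hsub
    have hginj : Function.Injective g := by
      intro a b hab
      have ha := hg a
      rw [hab] at ha
      exact Subtype.ext (ha.symm.trans (hg b))
    have hle : #{α : Λ // (↑(e x).2 : Λ) < α} ≤ #(Set.Iio x) :=
      Cardinal.mk_le_of_injective hginj
    exact absurd (lt_of_le_of_lt (le_trans (hpos _) hle)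
      (Cardinal.mk_Iio_ord_toType x)) (lt_irrefl κ)
  let f : W → Λ := (wellFounded_lt (α := W)).fix fun x IH => (step x IH).choose
  have hfeq : ∀ x : W, f x = (step x fun y _ => f y).choose := fun x =>
    WellFounded.fix_eq _ _ x
  have hflt : ∀ x : W, (↑(e x).2 : Λ) < f x := by
    intro x
    rw [hfeq x]
    exact (step x (fun y _ => f y)).choose_spec.1
  have hfne : ∀ x y : W, y < x → f y ≠ f x := by
    intro x y hy
    rw [hfeq x]
    exact (step x (fun y _ => f y)).choose_spec.2 y hy
  have hfinj : Function.Injective f := by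
    intro a b hab
    rcases lt_trichotomy a b with h | h | h
    · exact absurd hab (hfne b a h)
    · exact h
    · exact absurd hab.symm (hfne a b h)
  refine ⟨W, fun i => f '' {x : W | (e x).1 = i}, hW, ?_, ?_⟩
  · intro i j hij
    rw [Function.onFun, Set.disjoint_left]
    rintro a ⟨x, hx, rfl⟩ ⟨y, hy, hxy⟩
    exact hij (by rw [← hx, ← hy, hfinj hxy])
  · intro i
    constructor
    · intro a
      obtain ⟨t, htT, hat⟩ := hTcof a
      refine ⟨f (e.symm (i, ⟨t, htT⟩)), ⟨e.symm (i, ⟨t, htT⟩), ?_, rfl⟩, ?_⟩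
      · show (e (e.symm (i, ⟨t, htT⟩))).1 = i
        rw [Equiv.apply_symm_apply]
      · have h := hflt (e.symm (i, ⟨t, htT⟩))
        rw [Equiv.apply_symm_apply] at h
        exact hat.trans h.le
    · rw [Cardinal.mk_image_eq hfinj]
      have e1 : {x : W // (e x).1 = i} ≃ {p : W × ↥T // p.1 = i} :=
        e.subtypeEquiv fun x => Iff.rfl
      have e2 : {p : W × ↥T // p.1 = i} ≃ ↥T :=
        { toFun := fun p => p.1.2
          invFun := fun t => ⟨(i, t), rfl⟩
          left_inv := by rintro ⟨⟨a, b⟩, rfl⟩; rfl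
          right_inv := fun t => rfl }
      rw [← hTκ]
      exact Cardinal.mk_congr (e1.trans e2)
end

section
/- Let E₁, E₂ be Banach spaces, 𝒯 : E₁ → E₂ a bounded linear isomorphism onto its image, D ⊆ F closed linear subspaces of E₂, and Q : E₂ → E₂/D the quotient map. If there is c > 0 such that ‖𝒯ξ − φ‖ ≥ c‖ξ‖ for all φ ∈ F and ξ ∈ E₁, then Q ∘ 𝒯 is a linear isomorphism onto its image satisfying ‖Q ∘ 𝒯‖ · ‖(Q ∘ 𝒯)⁻¹‖ ≤ ‖𝒯‖/c. -/
/-- If `T : E₁ → E₂` is a bounded linear isomorphism onto its image which is `c`-preserved by a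
closed subspace `F`, and `D ⊆ F` is a closed subspace, then `Q ∘ T` (with `Q : E₂ → E₂/D` the
quotient map) is a linear isomorphism onto its image with distortion at most `‖T‖/c`
(expressed by the bounds `c‖ξ‖ ≤ ‖Q(Tξ)‖ ≤ ‖T‖‖ξ‖`). -/
theorem stmt2 {E₁ E₂ : Type*} [NormedAddCommGroup E₁] [NormedSpace ℂ E₁] [CompleteSpace E₁]
    [NormedAddCommGroup E₂] [NormedSpace ℂ E₂] [CompleteSpace E₂]
    (T : E₁ →L[ℂ] E₂) (hT : Function.Injective T)
    (D F : Submodule ℂ E₂) (hD : IsClosed (D : Set E₂)) (hF : IsClosed (F : Set E₂))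
    (hDF : D ≤ F) (c : ℝ) (hc : 0 < c)
    (hpres : ∀ φ ∈ F, ∀ ξ : E₁, c * ‖ξ‖ ≤ ‖T ξ - φ‖) :
    Function.Injective (fun ξ : E₁ => D.mkQ (T ξ)) ∧
    ∀ ξ : E₁, c * ‖ξ‖ ≤ ‖D.mkQ (T ξ)‖ ∧ ‖D.mkQ (T ξ)‖ ≤ ‖T‖ * ‖ξ‖ := by
  have hlow : ∀ ξ : E₁, c * ‖ξ‖ ≤ ‖D.mkQ (T ξ)‖ := by
    intro ξ
    by_contra h
    push_neg at h
    have hε : (0:ℝ) < c * ‖ξ‖ - ‖D.mkQ (T ξ)‖ := by linarith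
    obtain ⟨y, hy, hylt⟩ := Submodule.Quotient.norm_mk_lt (D.mkQ (T ξ)) hε
    have hd : T ξ - y ∈ D := (Submodule.Quotient.eq D).mp hy.symm
    have hp := hpres (T ξ - y) (hDF hd) ξ
    rw [sub_sub_cancel] at hp
    linarith
  refine ⟨?_, fun ξ => ⟨hlow ξ, ?_⟩⟩
  · intro a b hab
    have h0 : D.mkQ (T (a - b)) = 0 := by
      simp only at hab
      simp [map_sub, hab]
    have h1 : c * ‖a - b‖ ≤ 0 := by
      have := hlow (a - b)
      rw [h0] at this
      simpa using this
    have : ‖a - b‖ ≤ 0 := nonpos_of_mul_nonpos_right (by linarith) hc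
    have : a - b = 0 := by
      have := norm_nonneg (a - b)
      exact norm_eq_zero.mp (le_antisymm ‹‖a - b‖ ≤ 0› this ▸ rfl)
    exact sub_eq_zero.mp this
  · calc ‖D.mkQ (T ξ)‖ ≤ ‖T ξ‖ := Submodule.Quotient.norm_mk_le D (T ξ)
      _ ≤ ‖T‖ * ‖ξ‖ := T.le_opNorm ξ
end

section
/- Let S be an infinite, weakly cancellative semigroup of cardinality η, and let {S_α}_{α<η} be an increasing cover of S with |S_α| ≤ max(|α|, ℵ₀) < η for each α < η (when η is regular, |S_α| ≤ |α|+ℵ₀ suffices). Then there exists a faithfully indexed family {s_α}_{α<η} in S such that (S_α s_α) ∩ (S_β s_β) = ∅ and (s_α S_α) ∩ (s_β S_β) = ∅ for all α < β < η. -/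
/-- In an infinite, weakly cancellative semigroup `S` of cardinality `η`, given an increasing
cover `{S_α}_{α<η}` with `|S_α| ≤ max(|α|, ℵ₀) < η`, there is a faithfully indexed family
`{s_α}_{α<η}` with `(S_α s_α) ∩ (S_β s_β) = ∅` and `(s_α S_α) ∩ (s_β S_β) = ∅` for `α < β`. -/
theorem stmt12 {S : Type*} [Semigroup S] [Infinite S]
    (hwc : ∀ s t : S, {u : S | s * u = t}.Finite ∧ {u : S | u * s = t}.Finite)
    (A : (Cardinal.mk S).ord.ToType → Set S)
    (hmono : Monotone A)
    (hcover : (⋃ α, A α) = Set.univ)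
    (hcard : ∀ α, Cardinal.mk (A α) ≤
        max (Cardinal.mk {β : (Cardinal.mk S).ord.ToType // β < α}) Cardinal.aleph0 ∧
      max (Cardinal.mk {β : (Cardinal.mk S).ord.ToType // β < α}) Cardinal.aleph0
        < Cardinal.mk S) :
    ∃ s : (Cardinal.mk S).ord.ToType → S, Function.Injective s ∧
      ∀ α β, α < β →
        Disjoint ((fun t => t * s α) '' A α) ((fun t => t * s β) '' A β) ∧
        Disjoint ((fun t => s α * t) '' A α) ((fun t => s β * t) '' A β) := by
  classical
  have key : ∀ (β : (Cardinal.mk S).ord.ToType) (g : ∀ α : (Cardinal.mk S).ord.ToType, α < β → S), ∃ u : S,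
      (∀ α (h : α < β), u ≠ g α h) ∧
      (∀ α (h : α < β), ∀ a ∈ A β, ∀ b ∈ A α, a * u ≠ b * g α h) ∧
      (∀ α (h : α < β), ∀ a ∈ A β, ∀ b ∈ A α, u * a ≠ g α h * b) := by
    intro β g
    set μ := max (Cardinal.mk {γ : (Cardinal.mk S).ord.ToType // γ < β}) Cardinal.aleph0 with hμ
    have hμinf : Cardinal.aleph0 ≤ μ := le_max_right _ _
    obtain ⟨hAβ, hμκ⟩ := hcard β
    set Bad : Set S := (⋃ p : {γ : (Cardinal.mk S).ord.ToType // γ < β} × A β × A β,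
      ({u : S | (p.2.1 : S) * u = (p.2.2 : S) * g p.1 p.1.2} ∪
       {u : S | u * (p.2.1 : S) = g p.1 p.1.2 * (p.2.2 : S)})) ∪
      Set.range (fun γ : {γ : (Cardinal.mk S).ord.ToType // γ < β} => g γ γ.2) with hBad
    have hcardBad : Cardinal.mk Bad < Cardinal.mk S := by
      have h1 : Cardinal.mk (⋃ p : {γ : (Cardinal.mk S).ord.ToType // γ < β} × A β × A β,
          ({u : S | (p.2.1 : S) * u = (p.2.2 : S) * g p.1 p.1.2} ∪
           {u : S | u * (p.2.1 : S) = g p.1 p.1.2 * (p.2.2 : S)})) ≤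
          Cardinal.mk ({γ : (Cardinal.mk S).ord.ToType // γ < β} × A β × A β) * Cardinal.aleph0 := by
        refine le_trans (Cardinal.mk_iUnion_le _) ?_
        gcongr
        refine ciSup_le' fun p => ?_
        have hfin : (({u : S | (p.2.1 : S) * u = (p.2.2 : S) * g p.1 p.1.2} ∪
            {u : S | u * (p.2.1 : S) = g p.1 p.1.2 * (p.2.2 : S)}) : Set S).Finite :=
          Set.Finite.union (hwc _ _).1 (hwc _ _).2
        exact le_of_lt hfin.lt_aleph0
      have h2 : Cardinal.mk ({γ : (Cardinal.mk S).ord.ToType // γ < β} × A β × A β) ≤ μ := by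
        rw [Cardinal.mk_prod, Cardinal.mk_prod]
        simp only [Cardinal.lift_id]
        calc Cardinal.mk {γ : (Cardinal.mk S).ord.ToType // γ < β} * (Cardinal.mk (A β) * Cardinal.mk (A β)) ≤
            μ * (μ * μ) := by
              gcongr <;> first | exact le_max_left _ _ | exact hAβ
          _ = μ := by rw [Cardinal.mul_eq_self hμinf, Cardinal.mul_eq_self hμinf]
      calc Cardinal.mk Bad ≤ _ + _ := Cardinal.mk_union_le _ _
        _ ≤ μ * Cardinal.aleph0 + μ := by
            gcongr
            · exact h1.trans (by gcongr)
            · exact (Cardinal.mk_range_le).trans (le_max_left _ _)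
        _ ≤ μ * μ + μ := by gcongr
        _ = μ + μ := by rw [Cardinal.mul_eq_self hμinf]
        _ = μ := Cardinal.add_eq_self hμinf
        _ < Cardinal.mk S := hμκ
    have hex : ∃ u : S, u ∉ Bad := by
      by_contra h
      push_neg at h
      have : Bad = Set.univ := Set.eq_univ_iff_forall.2 h
      rw [this, Cardinal.mk_univ] at hcardBad
      exact lt_irrefl _ hcardBad
    obtain ⟨u, hu⟩ := hex
    rw [hBad, Set.mem_union, not_or] at hu
    obtain ⟨hu1, hu2⟩ := hu
    simp only [Set.mem_iUnion, not_exists, Set.mem_union, not_or] at hu1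
    simp only [Set.mem_range, not_exists] at hu2
    refine ⟨u, ?_, ?_, ?_⟩
    · intro α h heq
      exact hu2 ⟨α, h⟩ heq.symm
    · intro α h a ha b hb heq
      exact (hu1 ⟨⟨α, h⟩, ⟨a, ha⟩, ⟨b, hmono h.le hb⟩⟩).1 heq
    · intro α h a ha b hb heq
      exact (hu1 ⟨⟨α, h⟩, ⟨a, ha⟩, ⟨b, hmono h.le hb⟩⟩).2 heq
  -- define s by well-founded recursion
  let s : (Cardinal.mk S).ord.ToType → S := (IsWellFounded.wf (r := (· < · : (Cardinal.mk S).ord.ToType → (Cardinal.mk S).ord.ToType → Prop))).fix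
    (fun β ih => (key β ih).choose)
  have hs : ∀ β : (Cardinal.mk S).ord.ToType, s β = (key β (fun α _ => s α)).choose := fun β =>
    WellFounded.fix_eq _ _ β
  have hspec : ∀ β : (Cardinal.mk S).ord.ToType,
      (∀ α (h : α < β), s β ≠ s α) ∧
      (∀ α (h : α < β), ∀ a ∈ A β, ∀ b ∈ A α, a * s β ≠ b * s α) ∧
      (∀ α (h : α < β), ∀ a ∈ A β, ∀ b ∈ A α, s β * a ≠ s α * b) := by
    intro β
    rw [hs β]
    exact (key β (fun α _ => s α)).choose_spec
  refine ⟨s, ?_, ?_⟩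
  · intro α β heq
    rcases lt_trichotomy α β with h | h | h
    · exact absurd heq.symm ((hspec β).1 α h)
    · exact h
    · exact absurd heq ((hspec α).1 β h)
  · intro α β hlt
    constructor
    · rw [Set.disjoint_left]
      rintro x ⟨b, hb, rfl⟩ ⟨a, ha, hx⟩
      exact (hspec β).2.1 α hlt a ha b hb hx
    · rw [Set.disjoint_left]
      rintro x ⟨b, hb, rfl⟩ ⟨a, ha, hx⟩
      exact (hspec β).2.2 α hlt a ha b hb hx
end

section
/- Let 𝒜 be a Banach algebra and f ∈ 𝒜*. If the left orbit {a·f : a ∈ 𝒜, ‖a‖ ≤ 1} is relatively weakly compact (where (a·f)(b) = f(ba)), then for every pair of bounded sequences (a_n), (b_m) in 𝒜 such that both iterated limits lim_n lim_m f(a_n b_m) and lim_m lim_n f(a_n b_m) exist, the two iterated limits are equal. -/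
open Filter

/-- If the left orbit `{a·f : ‖a‖ ≤ 1}` of a functional `f ∈ 𝒜*` is relatively weakly
compact, then `f` satisfies Grothendieck's double limit criterion: for bounded sequences
`(a_n)`, `(b_m)` in `𝒜`, the two iterated limits of `f(a_n b_m)`, when both exist, agree. -/
theorem stmt19 {A : Type*} [NormedRing A] [NormedAlgebra ℂ A] [CompleteSpace A]
    (f : StrongDual ℂ A)
    (hcomp : IsCompact (closure (⇑(toWeakSpace ℂ (StrongDual ℂ A)) ''
      {g : StrongDual ℂ A | ∃ a : A, ‖a‖ ≤ 1 ∧ ∀ b : A, g b = f (b * a)})))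
    (a b : ℕ → A) (C : ℝ) (ha : ∀ n, ‖a n‖ ≤ C) (hb : ∀ m, ‖b m‖ ≤ C)
    (L₁ L₂ : ℂ) (r₁ r₂ : ℕ → ℂ)
    (h₁ : (∀ n, Tendsto (fun m => f (a n * b m)) atTop (nhds (r₁ n))) ∧
      Tendsto r₁ atTop (nhds L₁))
    (h₂ : (∀ m, Tendsto (fun n => f (a n * b m)) atTop (nhds (r₂ m))) ∧
      Tendsto r₂ atTop (nhds L₂)) :
    L₁ = L₂ := by
  classical
  have hC0 : (0 : ℝ) ≤ C := (norm_nonneg (a 0)).trans (ha 0)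
  rcases eq_or_lt_of_le hC0 with hC | hC
  · -- degenerate case `C = 0`: everything is zero
    have haz : ∀ n, a n = 0 := fun n =>
      norm_le_zero_iff.mp ((ha n).trans (le_of_eq hC.symm))
    have hfz : ∀ n m, f (a n * b m) = (0 : ℂ) := by
      intro n m; rw [haz n, zero_mul, map_zero]
    have hr₁ : ∀ n, r₁ n = 0 := by
      intro n
      refine tendsto_nhds_unique (h₁.1 n) ?_
      simp only [hfz]
      exact tendsto_const_nhds
    have hr₂ : ∀ m, r₂ m = 0 := by
      intro m
      refine tendsto_nhds_unique (h₂.1 m) ?_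
      simp only [hfz]
      exact tendsto_const_nhds
    have hL₁ : L₁ = 0 := by
      refine tendsto_nhds_unique h₁.2 ?_
      have : r₁ = fun _ => (0 : ℂ) := funext hr₁
      rw [this]
      exact tendsto_const_nhds
    have hL₂ : L₂ = 0 := by
      refine tendsto_nhds_unique h₂.2 ?_
      have : r₂ = fun _ => (0 : ℂ) := funext hr₂
      rw [this]
      exact tendsto_const_nhds
    rw [hL₁, hL₂]
  · -- main case `0 < C`
    have hCne : (C : ℂ) ≠ 0 := by exact_mod_cast (ne_of_gt hC)
    -- the orbit functionals
    set g : ℕ → StrongDual ℂ A := fun m =>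
      f.comp ((ContinuousLinearMap.mul ℂ A).flip ((C : ℂ)⁻¹ • b m)) with hg
    have hgmem : ∀ m, g m ∈
        {g : StrongDual ℂ A | ∃ a : A, ‖a‖ ≤ 1 ∧ ∀ b : A, g b = f (b * a)} := by
      intro m
      refine ⟨(C : ℂ)⁻¹ • b m, ?_, fun b' => rfl⟩
      rw [norm_smul, norm_inv, Complex.norm_real, Real.norm_of_nonneg hC0]
      rw [inv_mul_le_iff₀ hC, mul_one]
      exact hb m
    have hgapp : ∀ m n, g m (a n) = (C : ℂ)⁻¹ * f (a n * b m) := by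
      intro m n
      show f (a n * ((C : ℂ)⁻¹ • b m)) = _
      rw [mul_smul_comm, map_smul, smul_eq_mul]
    -- an ultrafilter extending `atTop`
    let U : Ultrafilter ℕ := Ultrafilter.of atTop
    have hU : (U : Filter ℕ) ≤ atTop := Ultrafilter.of_le atTop
    -- Banach-Alaoglu: a weak-* cluster point ψ of the evaluations at `a n` in the bidual
    let J : ℕ → WeakDual ℂ (StrongDual ℂ A) := fun n =>
      StrongDual.toWeakDual (NormedSpace.inclusionInDoubleDual ℂ A (a n))
    have hJball : ∀ n, J n ∈ WeakDual.toStrongDual ⁻¹' Metric.closedBall 0 C := by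
      intro n
      simp only [Set.mem_preimage, Metric.mem_closedBall, dist_zero_right]
      exact (dist_zero_right (WeakDual.toStrongDual (J n))).trans_le
        ((NormedSpace.double_dual_bound ℂ A (a n)).trans (ha n))
    obtain ⟨ψ, -, hψ⟩ :=
      (WeakDual.isCompact_closedBall
        (0 : StrongDual ℂ (StrongDual ℂ A)) C).ultrafilter_le_nhds
        (U.map J) (by
          simp only [le_principal_iff, Ultrafilter.coe_map, Filter.mem_map,
            Ultrafilter.mem_coe]
          exact Filter.univ_mem' hJball)
    have hψ' : Tendsto J U (nhds ψ) := by
      rw [Tendsto, ← Ultrafilter.coe_map]; exact hψ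
    -- evaluation: for every h in the dual, h (a n) → ψ h along U
    have hψeval : ∀ h : StrongDual ℂ A,
        Tendsto (fun n => h (a n)) U (nhds (ψ h)) := by
      intro h
      exact ((WeakDual.eval_continuous (𝕜 := ℂ) h).continuousAt
        (x := ψ)).tendsto.comp hψ'
    -- weak cluster point of the orbit sequence
    obtain ⟨gw, -, hgw⟩ := hcomp.ultrafilter_le_nhds
      (U.map (fun m => toWeakSpace ℂ (StrongDual ℂ A) (g m))) (by
        simp only [le_principal_iff, Ultrafilter.coe_map, Filter.mem_map,
          Ultrafilter.mem_coe]
        exact Filter.univ_mem' fun m => subset_closure ⟨g m, hgmem m, rfl⟩)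
    have hgw' : Tendsto (fun m => toWeakSpace ℂ (StrongDual ℂ A) (g m))
        U (nhds gw) := by
      rw [Tendsto, ← Ultrafilter.coe_map]; exact hgw
    set g₀ : StrongDual ℂ A :=
      (toWeakSpace ℂ (StrongDual ℂ A)).symm gw with hg₀
    -- evaluations against elements of the dual are weakly continuous
    have hweak : ∀ φ : StrongDual ℂ (StrongDual ℂ A),
        Tendsto (fun m => φ (g m)) U (nhds (φ g₀)) := by
      intro φ
      have hc : Continuous fun x : WeakSpace ℂ (StrongDual ℂ A) =>
          (topDualPairing ℂ (StrongDual ℂ A)).flip x φ :=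
        WeakBilin.eval_continuous _ φ
      exact (hc.continuousAt (x := gw)).tendsto.comp hgw'
    -- identify g₀ (a n)
    have hg₀eval : ∀ n, g₀ (a n) = (C : ℂ)⁻¹ * r₁ n := by
      intro n
      have h1 : Tendsto (fun m => g m (a n)) U (nhds (g₀ (a n))) :=
        hweak (NormedSpace.inclusionInDoubleDual ℂ A (a n))
      have h2 : Tendsto (fun m => g m (a n)) U (nhds ((C : ℂ)⁻¹ * r₁ n)) := by
        have := ((h₁.1 n).const_mul ((C : ℂ)⁻¹)).mono_left hU
        simpa [hgapp] using this
      exact tendsto_nhds_unique h1 h2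
    -- identify ψ g₀
    have hψg₀ : ψ g₀ = (C : ℂ)⁻¹ * L₁ := by
      have h1 : Tendsto (fun n => g₀ (a n)) U (nhds (ψ g₀)) := hψeval g₀
      have h2 : Tendsto (fun n => g₀ (a n)) U (nhds ((C : ℂ)⁻¹ * L₁)) := by
        have := (h₁.2.const_mul ((C : ℂ)⁻¹)).mono_left hU
        simpa [hg₀eval] using this
      exact tendsto_nhds_unique h1 h2
    -- identify ψ (g m)
    have hψg : ∀ m, ψ (g m) = (C : ℂ)⁻¹ * r₂ m := by
      intro m
      have h1 : Tendsto (fun n => g m (a n)) U (nhds (ψ (g m))) := hψeval (g m)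
      have h2 : Tendsto (fun n => g m (a n)) U (nhds ((C : ℂ)⁻¹ * r₂ m)) := by
        have := ((h₂.1 m).const_mul ((C : ℂ)⁻¹)).mono_left hU
        simpa [hgapp] using this
      exact tendsto_nhds_unique h1 h2
    -- ψ is weakly continuous, so ψ (g m) → ψ g₀ along U
    have hfinal1 : Tendsto (fun m => (WeakDual.toStrongDual ψ) (g m)) U
        (nhds ((WeakDual.toStrongDual ψ) g₀)) := hweak (WeakDual.toStrongDual ψ)
    have hfinal2 : Tendsto (fun m => (WeakDual.toStrongDual ψ) (g m)) U
        (nhds ((C : ℂ)⁻¹ * L₂)) := by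
      have := (h₂.2.const_mul ((C : ℂ)⁻¹)).mono_left hU
      have heq : (fun m => (WeakDual.toStrongDual ψ) (g m)) =
          fun m => (C : ℂ)⁻¹ * r₂ m := funext fun m => hψg m
      rw [heq]
      exact this
    have hfin : ψ g₀ = (C : ℂ)⁻¹ * L₂ := tendsto_nhds_unique hfinal1 hfinal2
    rw [hψg₀] at hfin
    exact mul_left_cancel₀ (inv_ne_zero hCne) hfin
end
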